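/- The nine points P_1,...,P_9 dual to the lines of the Fermat arrangement 𝒜⁰_3(3), namely the points (1:−ε^a:0), (1:0:−ε^a), (0:1:−ε^a) for a = 0,1,2, form a complete intersection: their homogeneous ideal in ℂ[x_0,x_1,x_2] is generated by x_0x_1x_2 and x_0³ + x_1³ + x_2³. -/

import Mathlib

open MvPolynomial
namespace NP
abbrev R3 : Type := MvPolynomial (Fin 3) ℂ

noncomputable def S (k : Fin 3) : R3 →ₐ[ℂ] R3 := aeval (Function.update X k 0)

lemma S_X (k l : Fin 3) : S k (X l) = if l = k then 0 else X l := by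
  simp [S, Function.update_apply]

lemma S_S (k : Fin 3) (f : R3) : S k (S k f) = S k f := by
  have h : (S k).comp (S k) = S k := by
    apply algHom_ext; intro l
    rcases eq_or_ne l k with rfl | h
    · simp [S_X]
    · simp [S_X, h]
  exact DFunLike.congr_fun h f

lemma X_dvd_sub_S (k : Fin 3) (f : R3) : X k ∣ f - S k f := by
  induction f using MvPolynomial.induction_on with
  | C a => simp [S]
  | add p q hp hq =>
      have := dvd_add hp hq
      rw [map_add]
      convert this using 1; ring
  | mul_X p i hp =>
      rcases eq_or_ne i k with rfl | h
      · rw [map_mul, S_X, if_pos rfl, mul_zero, sub_zero]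
        exact ⟨p, mul_comm p (X _)⟩
      · rw [map_mul, S_X, if_neg h]
        have : p * X i - S k p * X i = (p - S k p) * X i := by ring
        rw [this]
        exact hp.mul_right _

lemma X_dvd_of_S (k : Fin 3) (f : R3) (h : S k f = 0) : X k ∣ f := by
  have := X_dvd_sub_S k f; rwa [h, sub_zero] at this

lemma S_of_X_dvd (k : Fin 3) (f : R3) (h : X k ∣ f) : S k f = 0 := by
  obtain ⟨q, rfl⟩ := h
  rw [map_mul, S_X, if_pos rfl, zero_mul]

noncomputable def T (i j : Fin 3) (c : ℂ) : R3 →ₐ[ℂ] R3 :=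
  aeval (Function.update X i (X i + C c * X j))

lemma T_X (i j : Fin 3) (c : ℂ) (l : Fin 3) :
    T i j c (X l) = if l = i then X i + C c * X j else X l := by
  simp [T, Function.update_apply]

lemma T_C (i j : Fin 3) (c d : ℂ) : T i j c (C d) = C d := by
  simp [T, algebraMap_eq]

lemma T_T (i j : Fin 3) (hji : j ≠ i) (c d : ℂ) (f : R3) :
    T i j c (T i j d f) = T i j (c + d) f := by
  have h : (T i j c).comp (T i j d) = T i j (c + d) := by
    apply algHom_ext; intro l
    rcases eq_or_ne l i with h' | h'
    · subst h'
      rw [AlgHom.comp_apply, T_X, if_pos rfl, map_add, map_mul, T_C,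
        T_X, if_pos rfl, T_X, if_neg hji, T_X, if_pos rfl, C_add]
      ring
    · rw [AlgHom.comp_apply, T_X, if_neg h', T_X, if_neg h', T_X, if_neg h']
  exact DFunLike.congr_fun h f

lemma T_zero (i j : Fin 3) (f : R3) : T i j 0 f = f := by
  have h : T i j 0 = AlgHom.id ℂ R3 := by
    apply algHom_ext; intro l
    rcases eq_or_ne l i with h' | h'
    · subst h'; rw [T_X, if_pos rfl]; simp
    · rw [T_X, if_neg h']; rfl
  rw [h]; rfl

lemma dvd_of_aeval_line (i j : Fin 3) (hji : j ≠ i) (c : ℂ) (f : R3)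
    (h : aeval (Function.update X i (C c * X j)) f = 0) : (X i - C c * X j) ∣ f := by
  have hcomp : (S i).comp (T i j c) = aeval (Function.update X i (C c * X j)) := by
    apply algHom_ext; intro l
    rcases eq_or_ne l i with h' | h'
    · subst h'
      rw [AlgHom.comp_apply, T_X, if_pos rfl, map_add, map_mul, S_X, if_pos rfl,
        S_X, if_neg hji, aeval_X, Function.update_self]
      have : S l (C c) = C c := by simp [S, algebraMap_eq]
      rw [this, zero_add]
    · rw [AlgHom.comp_apply, T_X, if_neg h', S_X, if_neg h', aeval_X,
        Function.update_of_ne h']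
  have key : S i (T i j c f) = 0 := by
    have h2 := DFunLike.congr_fun hcomp f
    simp only [AlgHom.comp_apply] at h2
    rw [h2, h]
  obtain ⟨q, hq⟩ := X_dvd_of_S i _ key
  refine ⟨T i j (-c) q, ?_⟩
  have h2 := congrArg (T i j (-c)) hq
  rw [T_T i j hji, neg_add_cancel, T_zero, map_mul, T_X, if_pos rfl, map_neg] at h2
  rw [h2]; ring

lemma prime_X3 (i : Fin 3) : Prime (X i : R3) := by
  have h0 : Prime (X (0 : Fin 3) : R3) := by
    refine comap_prime (f := (MvPolynomial.finSuccEquiv ℂ 2).toAlgHom)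
      (g := (MvPolynomial.finSuccEquiv ℂ 2).symm.toAlgHom)
      (fun a => (MvPolynomial.finSuccEquiv ℂ 2).symm_apply_apply a) ?_
    have : (MvPolynomial.finSuccEquiv ℂ 2).toAlgHom (X 0) = Polynomial.X := by
      simpa using MvPolynomial.finSuccEquiv_X_zero (R := ℂ) (n := 2)
    rw [this]
    exact Polynomial.prime_X
  have hswap : ∀ a : R3, rename (Equiv.swap i (0 : Fin 3)) (rename (Equiv.swap i (0 : Fin 3)) a) = a := by
    intro a
    rw [rename_rename]
    have : (⇑(Equiv.swap i (0 : Fin 3))) ∘ (⇑(Equiv.swap i (0 : Fin 3))) = id :=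
      funext fun x => Equiv.swap_apply_self _ _ _
    rw [this, rename_id, AlgHom.id_apply]
  refine comap_prime (f := (rename (Equiv.swap i (0 : Fin 3)) : R3 →ₐ[ℂ] R3))
    (g := (rename (Equiv.swap i (0 : Fin 3)) : R3 →ₐ[ℂ] R3)) hswap ?_
  rw [rename_X, Equiv.swap_apply_left]
  exact h0

lemma prime_linear (i j : Fin 3) (hji : j ≠ i) (c : ℂ) :
    Prime (X i - C c * X j : R3) := by
  refine comap_prime (f := T i j c) (g := T i j (-c))
    (fun a => by rw [T_T i j hji, neg_add_cancel, T_zero]) ?_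
  have : T i j c (X i - C c * X j) = X i := by
    rw [map_sub, map_mul, T_C, T_X, if_pos rfl, T_X, if_neg hji]; ring
  rw [this]
  exact prime_X3 i

lemma not_dvd_linear (i j : Fin 3) (hji : j ≠ i) (c d : ℂ) (hcd : c ≠ d) :
    ¬ (X i - C c * X j : R3) ∣ (X i - C d * X j) := by
  rintro ⟨q, hq⟩
  have h2 := congrArg (aeval (Function.update X i (C c * X j)) : R3 →ₐ[ℂ] R3) hq
  simp only [map_sub, map_mul, aeval_X, aeval_C, Function.update_self,
    Function.update_of_ne hji, algebraMap_eq, sub_self, zero_mul] at h2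
  have h3 : (C (c - d) : R3) * X j = 0 := by rw [C_sub]; linear_combination h2
  have hc : (C (c - d) : R3) ≠ 0 := by rw [Ne, C_eq_zero]; exact sub_ne_zero.mpr hcd
  exact (mul_ne_zero hc (X_ne_zero j)) h3

lemma triple_dvd (p1 p2 p3 g : R3) (h1 : p1 ∣ g) (h2 : p2 ∣ g) (h3 : p3 ∣ g)
    (hp2 : Prime p2) (hp3 : Prime p3) (h21 : ¬ p2 ∣ p1) (h31 : ¬ p3 ∣ p1)
    (h32 : ¬ p3 ∣ p2) : p1 * p2 * p3 ∣ g := by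
  obtain ⟨a, rfl⟩ := h1
  have ha : p2 ∣ a := ((hp2.dvd_mul).mp h2).resolve_left h21
  obtain ⟨b, rfl⟩ := ha
  have hb : p3 ∣ b := by
    rcases (hp3.dvd_mul).mp h3 with h | h
    · exact absurd h h31
    · exact ((hp3.dvd_mul).mp h).resolve_left h32
  obtain ⟨c, rfl⟩ := hb
  exact ⟨c, by ring⟩

lemma linear_prod (i j : Fin 3) (u v w : ℂ) (h1 : u + v + w = 0)
    (h2 : u * v + u * w + v * w = 0) (h3 : u * v * w = -1) :
    (X i - C u * X j) * (X i - C v * X j) * (X i - C w * X j)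
      = (X i ^ 3 + X j ^ 3 : R3) := by
  have e : (X i - C u * X j) * (X i - C v * X j) * (X i - C w * X j)
      = X i ^ 3 - C (u + v + w) * X i ^ 2 * X j
        + C (u * v + u * w + v * w) * X i * X j ^ 2 - C (u * v * w) * X j ^ 3 := by
    simp only [C_add, C_mul]; ring
  rw [e, h1, h2, h3]
  simp only [map_zero, map_neg, map_one]
  ring

lemma cube_dvd (ε : ℂ) (hε : IsPrimitiveRoot ε 3) (i j : Fin 3) (hji : j ≠ i) (g : R3)
    (ha : aeval (Function.update X j (C (-1 : ℂ) * X i)) g = 0)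
    (hb : aeval (Function.update X j (C (-ε) * X i)) g = 0)
    (hc : aeval (Function.update X j (C (-ε ^ 2) * X i)) g = 0) :
    (X j ^ 3 + X i ^ 3) ∣ g := by
  have hij : i ≠ j := Ne.symm hji
  have d0 := dvd_of_aeval_line j i hij (-1) g ha
  have d1 := dvd_of_aeval_line j i hij (-ε) g hb
  have d2 := dvd_of_aeval_line j i hij (-ε ^ 2) g hc
  have hε3 : ε ^ 3 = 1 := hε.pow_eq_one
  have hsum : 1 + ε + ε ^ 2 = 0 := by
    have := hε.geom_sum_eq_zero (by norm_num)
    simpa [Finset.sum_range_succ] using this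
  have hne1 : (-1 : ℂ) ≠ -ε := by
    intro hh
    exact hε.ne_one (by norm_num) (neg_inj.mp hh).symm
  have hne2 : (-1 : ℂ) ≠ -ε ^ 2 := by
    intro hh
    have h2 : ε ^ 2 = 1 := (neg_inj.mp hh).symm
    exact hε.ne_one (by norm_num) (by linear_combination hε3 - ε * h2)
  have hne3 : (-ε : ℂ) ≠ -ε ^ 2 := by
    intro hh
    have h2 : ε = ε ^ 2 := neg_inj.mp hh
    exact hε.ne_one (by norm_num) (by linear_combination hε3 + (1 + ε) * h2)
  have hprod := linear_prod j i (-1) (-ε) (-ε ^ 2)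
    (by linear_combination -hsum)
    (by linear_combination hsum + hε3)
    (by linear_combination -hε3)
  have := triple_dvd _ _ _ g d0 d1 d2
    (prime_linear j i hij (-ε)) (prime_linear j i hij (-ε ^ 2))
    (not_dvd_linear j i hij (-ε) (-1) (Ne.symm hne1))
    (not_dvd_linear j i hij (-ε ^ 2) (-1) (Ne.symm hne2))
    (not_dvd_linear j i hij (-ε ^ 2) (-ε) (Ne.symm hne3))
  rwa [hprod] at this

lemma aeval_line_eq_zero (f : R3) (v : Fin 3 → ℂ) (i : Fin 3)
    (hv : ∀ t : ℂ, eval (t • v) f = 0) :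
    aeval (fun l => C (v l) * X i) f = 0 := by
  apply MvPolynomial.funext
  intro x
  rw [map_zero]
  have hb : eval x (aeval (fun l => C (v l) * X i) f)
      = eval (fun l => eval x (C (v l) * X i)) f :=
    eval₂Hom_bind₁ (RingHom.id ℂ) x (fun l => C (v l) * X i) f
  rw [hb]
  have he : (fun l => eval x (C (v l) * X i)) = x i • v := by
    funext l
    simp [mul_comm]
  rw [he]
  exact hv (x i)

lemma fam1 (f : R3) (c : ℂ) (hv : ∀ t : ℂ, eval (t • ![1, c, 0]) f = 0) :
    aeval (Function.update X 1 (C c * X 0)) (S 2 f) = 0 := by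
  have A := aeval_line_eq_zero f ![1, c, 0] 0 hv
  have hc : (aeval (Function.update X 1 (C c * X 0)) : R3 →ₐ[ℂ] R3).comp (S 2)
      = aeval (fun l => C (![1, c, 0] l) * X 0) := by
    apply algHom_ext; intro l
    fin_cases l <;>
      simp [S_X, Function.update_apply]
  have h2 := DFunLike.congr_fun hc f
  simp only [AlgHom.comp_apply] at h2
  rw [h2, A]

lemma fam2 (f : R3) (c : ℂ) (hv : ∀ t : ℂ, eval (t • ![1, 0, c]) f = 0) :
    aeval (Function.update X 2 (C c * X 0)) (S 1 f) = 0 := by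
  have A := aeval_line_eq_zero f ![1, 0, c] 0 hv
  have hc : (aeval (Function.update X 2 (C c * X 0)) : R3 →ₐ[ℂ] R3).comp (S 1)
      = aeval (fun l => C (![1, 0, c] l) * X 0) := by
    apply algHom_ext; intro l
    fin_cases l <;>
      simp [S_X, Function.update_apply]
  have h2 := DFunLike.congr_fun hc f
  simp only [AlgHom.comp_apply] at h2
  rw [h2, A]

lemma fam3 (f : R3) (c : ℂ) (hv : ∀ t : ℂ, eval (t • ![0, 1, c]) f = 0) :
    aeval (Function.update X 2 (C c * X 1)) (S 0 f) = 0 := by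
  have A := aeval_line_eq_zero f ![0, 1, c] 1 hv
  have hc : (aeval (Function.update X 2 (C c * X 1)) : R3 →ₐ[ℂ] R3).comp (S 0)
      = aeval (fun l => C (![0, 1, c] l) * X 1) := by
    apply algHom_ext; intro l
    fin_cases l <;>
      simp [S_X, Function.update_apply]
  have h2 := DFunLike.congr_fun hc f
  simp only [AlgHom.comp_apply] at h2
  rw [h2, A]
end NP

/-- Representatives of the nine points in `ℙ²(ℂ)` dual to the lines of the Fermat
arrangement `𝒜⁰_3(3)`. -/
def ninePoints (ε : ℂ) : Fin 9 → (Fin 3 → ℂ) :=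
  ![![1, -1, 0], ![1, -ε, 0], ![1, -ε ^ 2, 0],
    ![1, 0, -1], ![1, 0, -ε], ![1, 0, -ε ^ 2],
    ![0, 1, -1], ![0, 1, -ε], ![0, 1, -ε ^ 2]]

open NP

theorem ninePoints_complete_intersection (ε : ℂ) (hε : IsPrimitiveRoot ε 3)
    (f : MvPolynomial (Fin 3) ℂ) :
    (∀ k : Fin 9, ∀ t : ℂ, MvPolynomial.eval (t • ninePoints ε k) f = 0) ↔
      f ∈ Ideal.span ({X 0 * X 1 * X 2, X 0 ^ 3 + X 1 ^ 3 + X 2 ^ 3} :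
        Set (MvPolynomial (Fin 3) ℂ)) := by
  have hε3 : ε ^ 3 = 1 := hε.pow_eq_one
  constructor
  · intro h
    set FF : R3 := X 0 ^ 3 + X 1 ^ 3 + X 2 ^ 3 with hFF
    -- extract the nine pointwise hypotheses
    have e0 : ∀ t : ℂ, eval (t • ![1, (-1 : ℂ), 0]) f = 0 := fun t => by
      have := h 0 t; rwa [show ninePoints ε 0 = ![1, (-1 : ℂ), 0] from rfl] at this
    have e1 : ∀ t : ℂ, eval (t • ![1, -ε, 0]) f = 0 := fun t => by
      have := h 1 t; rwa [show ninePoints ε 1 = ![1, -ε, 0] from rfl] at this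
    have e2 : ∀ t : ℂ, eval (t • ![1, -ε ^ 2, 0]) f = 0 := fun t => by
      have := h 2 t; rwa [show ninePoints ε 2 = ![1, -ε ^ 2, 0] from rfl] at this
    have e3 : ∀ t : ℂ, eval (t • ![1, 0, (-1 : ℂ)]) f = 0 := fun t => by
      have := h 3 t; rwa [show ninePoints ε 3 = ![1, 0, (-1 : ℂ)] from rfl] at this
    have e4 : ∀ t : ℂ, eval (t • ![1, 0, -ε]) f = 0 := fun t => by
      have := h 4 t; rwa [show ninePoints ε 4 = ![1, 0, -ε] from rfl] at this
    have e5 : ∀ t : ℂ, eval (t • ![1, 0, -ε ^ 2]) f = 0 := fun t => by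
      have := h 5 t; rwa [show ninePoints ε 5 = ![1, 0, -ε ^ 2] from rfl] at this
    have e6 : ∀ t : ℂ, eval (t • ![0, 1, (-1 : ℂ)]) f = 0 := fun t => by
      have := h 6 t; rwa [show ninePoints ε 6 = ![0, 1, (-1 : ℂ)] from rfl] at this
    have e7 : ∀ t : ℂ, eval (t • ![0, 1, -ε]) f = 0 := fun t => by
      have := h 7 t; rwa [show ninePoints ε 7 = ![0, 1, -ε] from rfl] at this
    have e8 : ∀ t : ℂ, eval (t • ![0, 1, -ε ^ 2]) f = 0 := fun t => by
      have := h 8 t; rwa [show ninePoints ε 8 = ![0, 1, -ε ^ 2] from rfl] at this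
    have cube1 : (X 1 ^ 3 + X 0 ^ 3 : R3) ∣ S 2 f :=
      cube_dvd ε hε 0 1 (by decide) (S 2 f) (fam1 f (-1) e0) (fam1 f (-ε) e1)
        (fam1 f (-ε ^ 2) e2)
    have cube2 : (X 2 ^ 3 + X 0 ^ 3 : R3) ∣ S 1 f :=
      cube_dvd ε hε 0 2 (by decide) (S 1 f) (fam2 f (-1) e3) (fam2 f (-ε) e4)
        (fam2 f (-ε ^ 2) e5)
    have cube3 : (X 2 ^ 3 + X 1 ^ 3 : R3) ∣ S 0 f :=
      cube_dvd ε hε 1 2 (by decide) (S 0 f) (fam3 f (-1) e6) (fam3 f (-ε) e7)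
        (fam3 f (-ε ^ 2) e8)
    -- auxiliary S-computations
    have hS2F : S 2 FF = X 0 ^ 3 + X 1 ^ 3 := by
      simp [hFF, map_add, map_pow, S_X]
    have hS1F : S 1 FF = X 0 ^ 3 + X 2 ^ 3 := by
      simp [hFF, map_add, map_pow, S_X]
    have hS0F : S 0 FF = X 1 ^ 3 + X 2 ^ 3 := by
      simp [hFF, map_add, map_pow, S_X]
    have hS1X2 : S 1 (X 2 : R3) = X 2 := by simp [S_X]
    have hS0X1 : S 0 (X 1 : R3) = X 1 := by simp [S_X]
    have hS0X2 : S 0 (X 2 : R3) = X 2 := by simp [S_X]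
    -- Step 1 : split off the x2 = 0 part
    obtain ⟨u', hu'⟩ := cube1
    set u : R3 := S 2 u' with hu_def
    have hSu : S 2 u = u := S_S 2 u'
    have hu : S 2 f = (X 1 ^ 3 + X 0 ^ 3) * u := by
      have h2 := congrArg (S 2) hu'
      rw [S_S, map_mul] at h2
      rw [h2, ← hu_def]
      refine congrArg (· * u) ?_
      simp [map_add, map_pow, S_X]
    have hv2 : S 2 (f - FF * u) = 0 := by
      rw [map_sub, map_mul, hu, hS2F, hSu]; ring
    obtain ⟨g, hg⟩ := X_dvd_of_S 2 _ hv2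
    -- Step 2 : split off the x1 = 0 part of g
    obtain ⟨v', hv'⟩ := cube2
    set v : R3 := S 1 v' with hv_def
    have hSv : S 1 v = v := S_S 1 v'
    have hv : S 1 f = (X 2 ^ 3 + X 0 ^ 3) * v := by
      have h2 := congrArg (S 1) hv'
      rw [S_S, map_mul] at h2
      rw [h2, ← hv_def]
      refine congrArg (· * v) ?_
      simp [map_add, map_pow, S_X]
    have key2 : X 2 * S 1 g = (X 2 ^ 3 + X 0 ^ 3) * (v - S 1 u) := by
      have h2 := congrArg (S 1) hg
      rw [map_sub, map_mul, map_mul, hS1X2, hv, hS1F] at h2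
      linear_combination -h2
    have hnd2 : ¬ (X 2 : R3) ∣ (X 2 ^ 3 + X 0 ^ 3) := by
      intro hd
      have hz := S_of_X_dvd 2 _ hd
      have hz2 : S 2 (X 2 ^ 3 + X 0 ^ 3 : R3) = X 0 ^ 3 := by
        simp [map_add, map_pow, S_X]
      rw [hz] at hz2
      exact pow_ne_zero 3 (X_ne_zero 0) hz2.symm
    obtain ⟨w', hw'⟩ := ((prime_X3 2).dvd_mul.mp ⟨S 1 g, key2.symm⟩).resolve_left hnd2
    set w : R3 := S 1 w' with hw_def
    have hSw : S 1 w = w := S_S 1 w'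
    have hw : v - S 1 u = X 2 * w := by
      have h2 := congrArg (S 1) hw'
      rw [map_sub, hSv, S_S, map_mul, hS1X2] at h2
      rw [h2, ← hw_def]
    have hg1 : S 1 g = (X 2 ^ 3 + X 0 ^ 3) * w := by
      apply mul_left_cancel₀ (X_ne_zero 2 : (X 2 : R3) ≠ 0)
      rw [key2, hw]; ring
    have hv1 : S 1 (g - FF * w) = 0 := by
      rw [map_sub, map_mul, hg1, hS1F, hSw]; ring
    obtain ⟨p, hp⟩ := X_dvd_of_S 1 _ hv1
    -- Step 3 : split off the x0 = 0 part of p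
    obtain ⟨s', hs'⟩ := cube3
    set sv : R3 := S 0 s' with hs_def
    have hSs : S 0 sv = sv := S_S 0 s'
    have hs : S 0 f = (X 2 ^ 3 + X 1 ^ 3) * sv := by
      have h2 := congrArg (S 0) hs'
      rw [S_S, map_mul] at h2
      rw [h2, ← hs_def]
      refine congrArg (· * sv) ?_
      simp [map_add, map_pow, S_X]
    have hf2 : f = FF * u + X 2 * (FF * w + X 1 * p) := by
      rw [← hp]
      linear_combination hg
    have key3 : X 1 * (X 2 * S 0 p)
        = (X 1 ^ 3 + X 2 ^ 3) * (sv - S 0 u - X 2 * S 0 w) := by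
      have h2 := congrArg (S 0) hf2
      simp only [map_add, map_mul] at h2
      rw [hS0F, hs, hS0X1, hS0X2] at h2
      linear_combination -h2
    have hnd1 : ¬ (X 1 : R3) ∣ (X 1 ^ 3 + X 2 ^ 3) := by
      intro hd
      have hz := S_of_X_dvd 1 _ hd
      have hz2 : S 1 (X 1 ^ 3 + X 2 ^ 3 : R3) = X 2 ^ 3 := by
        simp [map_add, map_pow, S_X]
      rw [hz] at hz2
      exact pow_ne_zero 3 (X_ne_zero 2) hz2.symm
    have hnd2' : ¬ (X 2 : R3) ∣ (X 1 ^ 3 + X 2 ^ 3) := by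
      intro hd
      have hz := S_of_X_dvd 2 _ hd
      have hz2 : S 2 (X 1 ^ 3 + X 2 ^ 3 : R3) = X 1 ^ 3 := by
        simp [map_add, map_pow, S_X]
      rw [hz] at hz2
      exact pow_ne_zero 3 (X_ne_zero 1) hz2.symm
    obtain ⟨D1, hD1⟩ := ((prime_X3 1).dvd_mul.mp
      ⟨X 2 * S 0 p, key3.symm⟩).resolve_left hnd1
    have key4 : X 2 * S 0 p = (X 1 ^ 3 + X 2 ^ 3) * D1 := by
      apply mul_left_cancel₀ (X_ne_zero 1 : (X 1 : R3) ≠ 0)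
      rw [key3, hD1]; ring
    obtain ⟨m', hm'⟩ := ((prime_X3 2).dvd_mul.mp
      ⟨S 0 p, key4.symm⟩).resolve_left hnd2'
    have key5 : S 0 p = (X 1 ^ 3 + X 2 ^ 3) * m' := by
      apply mul_left_cancel₀ (X_ne_zero 2 : (X 2 : R3) ≠ 0)
      rw [key4, hm']; ring
    set m : R3 := S 0 m' with hm_def
    have hSm : S 0 m = m := S_S 0 m'
    have hm : S 0 p = (X 1 ^ 3 + X 2 ^ 3) * m := by
      have h2 := congrArg (S 0) key5
      rw [S_S, map_mul] at h2
      rw [h2, ← hm_def]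
      refine congrArg (· * m) ?_
      simp [map_add, map_pow, S_X]
    have hv0 : S 0 (p - FF * m) = 0 := by
      rw [map_sub, map_mul, hm, hS0F, hSm]; ring
    obtain ⟨n, hn⟩ := X_dvd_of_S 0 _ hv0
    -- assemble
    rw [Ideal.mem_span_pair]
    refine ⟨n, u + X 2 * w + X 1 * X 2 * m, ?_⟩
    linear_combination -hg - X 2 * hp - X 2 * X 1 * hn
  · intro hf k t
    have hz1 : ninePoints ε k 0 * ninePoints ε k 1 * ninePoints ε k 2 = 0 := by
      fin_cases k <;> norm_num [ninePoints, Matrix.cons_val_two, Matrix.tail_cons, Matrix.head_cons]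
    have hz2 : (ninePoints ε k 0) ^ 3 + (ninePoints ε k 1) ^ 3 + (ninePoints ε k 2) ^ 3 = 0 := by
      fin_cases k <;> norm_num [ninePoints, Matrix.cons_val_two, Matrix.tail_cons, Matrix.head_cons] <;>
        first
          | linear_combination hε3
          | linear_combination -hε3
          | linear_combination (ε ^ 3 + 1) * hε3
          | linear_combination (-ε ^ 3 - 1) * hε3
    have h1 : eval (t • ninePoints ε k) (X 0 * X 1 * X 2 : R3) = 0 := by
      have he : eval (t • ninePoints ε k) (X 0 * X 1 * X 2 : R3)
          = t ^ 3 * (ninePoints ε k 0 * ninePoints ε k 1 * ninePoints ε k 2) := by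
        simp [smul_eq_mul]; ring
      rw [he, hz1, mul_zero]
    have h2 : eval (t • ninePoints ε k) (X 0 ^ 3 + X 1 ^ 3 + X 2 ^ 3 : R3) = 0 := by
      have he : eval (t • ninePoints ε k) (X 0 ^ 3 + X 1 ^ 3 + X 2 ^ 3 : R3)
          = t ^ 3 * ((ninePoints ε k 0) ^ 3 + (ninePoints ε k 1) ^ 3
            + (ninePoints ε k 2) ^ 3) := by
        simp [smul_eq_mul]; ring
      rw [he, hz2, mul_zero]
    have hle : Ideal.span ({X 0 * X 1 * X 2, X 0 ^ 3 + X 1 ^ 3 + X 2 ^ 3} : Set R3)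
        ≤ RingHom.ker (eval (t • ninePoints ε k) : R3 →+* ℂ) := by
      rw [Ideal.span_le]
      rintro q hq
      simp only [Set.mem_insert_iff, Set.mem_singleton_iff] at hq
      rcases hq with rfl | rfl
      · exact h1
      · exact h2
    exact RingHom.mem_ker.mp (hle hf)
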